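/- In the SAT construction for 3-literal clause c_j = (l_t, l_s, l_r) with three pairs of adjacent clause-agents having preferences (c_j, d) & (l_t, c_j), (c_j, d) & (l_s, c_j), (c_j, d) & (l_r, c_j): under every voting order candidate c_j receives at least 3 votes from these six clause-agents, and exactly 3 + (number of pairs in which the second agent votes c_j) votes from them; in each pair, the second agent (with preferences (l, c_j)) votes l if she votes before her partner, and votes c_j if she votes after her partner (since her partner always votes c_j when voting first). -/

import Mathlib

open scoped Classical
open Finset

/-- The set of neighbors of `x` (w.r.t. adjacency `adj`) that vote before `x`
in the voting order `ord` (smaller `ord`-value votes earlier). -/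
noncomputable def prior {V : Type*} [Fintype V] (adj : V → V → Prop) (ord : V → ℕ) (x : V) :
    Finset V :=
  Finset.univ.filter fun y => adj x y ∧ ord y < ord x

/-- Refined social poll model: `f` is the (unique) vote function arising from the
voting order `ord`: an agent `x` votes `c ∈ P x` if strictly more than half of her
previously-voting neighbors voted `c`, and otherwise votes her top choice `p1 x`. -/
def Consistent {V C : Type*} [Fintype V] (adj : V → V → Prop)
    (P : V → Finset C) (p1 : V → C) (ord : V → ℕ) (f : V → C) : Prop :=
  ∀ x : V,
    (∃ c ∈ P x,
        (2 * (((prior adj ord x).filter fun y => f y = c).card) > (prior adj ord x).card)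
        ∧ f x = c)
    ∨ ((¬ ∃ c ∈ P x,
          2 * (((prior adj ord x).filter fun y => f y = c).card) > (prior adj ord x).card)
        ∧ f x = p1 x)

/-- The score of candidate `c`: the number of agents voting for `c`. -/
noncomputable def score {V C : Type*} [Fintype V] (f : V → C) (c : C) : ℕ :=
  (Finset.univ.filter fun x => f x = c).card

/-- Six clause-agents for a 3-literal clause: three isolated edges (pairs), pair `p`
consisting of agent `(p,0)` with preferences `(c_j, d)` and agent `(p,1)` with
preferences `(l_p, c_j)`. -/
def adj19 (x y : Fin 3 × Fin 2) : Prop := x.1 = y.1 ∧ x.2 ≠ y.2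

noncomputable def P19 {C : Type*} (cj d : C) (l : Fin 3 → C) (x : Fin 3 × Fin 2) : Finset C :=
  if x.2 = 0 then {cj, d} else {l x.1, cj}

def p119 {C : Type*} (cj d : C) (l : Fin 3 → C) (x : Fin 3 × Fin 2) : C :=
  if x.2 = 0 then cj else l x.1

/-- For a 3-literal clause's six clause-agents: under every voting order `c_j` receives
at least 3 of their votes, and exactly `3 +` the number of pairs whose second agent
votes `c_j`; in each pair, the second agent votes `l_p` if she votes before her
partner, and votes `c_j` if she votes after her partner (the partner always votes
`c_j` when voting first). -/
theorem clause_agents_votes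
    {C : Type*} (cj d : C) (l : Fin 3 → C)
    (hcd : cj ≠ d) (hl : ∀ p, l p ≠ cj ∧ l p ≠ d)
    (ord : Fin 3 × Fin 2 → ℕ) (hord : Function.Injective ord)
    (f : Fin 3 × Fin 2 → C)
    (hf : Consistent adj19 (P19 cj d l) (p119 cj d l) ord f) :
    3 ≤ score f cj ∧
    score f cj = 3 + (Finset.univ.filter fun p : Fin 3 => f (p, 1) = cj).card ∧
    ∀ p : Fin 3,
      (ord (p, 1) < ord (p, 0) → f (p, 1) = l p) ∧
      (ord (p, 0) < ord (p, 1) → f (p, 1) = cj) := by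

  -- prior set computations
  have hp0 : ∀ p : Fin 3, prior adj19 ord (p, 0) =
      if ord (p, 1) < ord (p, 0) then {(p, 1)} else ∅ := by
    intro p
    ext y
    rcases y with ⟨a, b⟩
    rw [prior, Finset.mem_filter]
    simp only [prior, adj19, Finset.mem_filter, Finset.mem_univ, true_and]
    by_cases h : ord (p, 1) < ord (p, 0)
    · simp only [h, if_true, Finset.mem_singleton]
      constructor
      · rintro ⟨⟨h1, h2⟩, _⟩
        subst h1
        fin_cases b <;> simp_all
      · intro h'
        simp only [Prod.mk.injEq] at h'
        obtain ⟨rfl, rfl⟩ := h'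
        exact ⟨⟨rfl, by decide⟩, h⟩
    · simp only [h, if_false, Finset.notMem_empty, iff_false]
      rintro ⟨⟨h1, h2⟩, h3⟩
      subst h1
      fin_cases b <;> simp_all <;> omega
  have hp1 : ∀ p : Fin 3, prior adj19 ord (p, 1) =
      if ord (p, 0) < ord (p, 1) then {(p, 0)} else ∅ := by
    intro p
    ext y
    rcases y with ⟨a, b⟩
    rw [prior, Finset.mem_filter]
    simp only [prior, adj19, Finset.mem_filter, Finset.mem_univ, true_and]
    by_cases h : ord (p, 0) < ord (p, 1)
    · simp only [h, if_true, Finset.mem_singleton]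
      constructor
      · rintro ⟨⟨h1, h2⟩, _⟩
        subst h1
        fin_cases b <;> simp_all
      · intro h'
        simp only [Prod.mk.injEq] at h'
        obtain ⟨rfl, rfl⟩ := h'
        exact ⟨⟨rfl, by decide⟩, h⟩
    · simp only [h, if_false, Finset.notMem_empty, iff_false]
      rintro ⟨⟨h1, h2⟩, h3⟩
      subst h1
      fin_cases b <;> simp_all <;> omega
  -- empty prior ⇒ vote top choice
  have hemp : ∀ x, prior adj19 ord x = ∅ → f x = p119 cj d l x := by
    intro x hx
    rcases hf x with ⟨c, _, hgt, _⟩ | ⟨_, h⟩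
    · rw [hx] at hgt; simp at hgt
    · exact h
  -- in each pair, second-voting (p,1) before partner votes l p
  have hA : ∀ p : Fin 3, ord (p, 1) < ord (p, 0) → f (p, 1) = l p := by
    intro p h
    have : prior adj19 ord (p, 1) = ∅ := by rw [hp1 p, if_neg (lt_asymm h)]
    have := hemp _ this
    simpa [p119] using this
  -- agent (p,0) always votes cj
  have hf0 : ∀ p : Fin 3, f (p, 0) = cj := by
    intro p
    by_cases h : ord (p, 0) < ord (p, 1)
    · have : prior adj19 ord (p, 0) = ∅ := by rw [hp0 p, if_neg (lt_asymm h)]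
      have := hemp _ this
      simpa [p119] using this
    · have horder : ord (p, 1) < ord (p, 0) := by
        rcases lt_trichotomy (ord (p, 0)) (ord (p, 1)) with h' | h' | h'
        · exact absurd h' h
        · exact absurd (hord h') (by simp)
        · exact h'
      have hpr : prior adj19 ord (p, 0) = {(p, 1)} := by rw [hp0 p, if_pos horder]
      have hfl : f (p, 1) = l p := hA p horder
      rcases hf (p, 0) with ⟨c, hc, hgt, _⟩ | ⟨_, hx⟩
      · rw [hpr] at hgt
        have hc' : c = cj ∨ c = d := by simpa [P19] using hc
        have : f (p, 1) ≠ c := by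
          rcases hc' with rfl | rfl
          · rw [hfl]; exact (hl p).1
          · rw [hfl]; exact (hl p).2
        rw [Finset.filter_singleton, if_neg this] at hgt
        simp at hgt
      · simpa [p119] using hx
  have hB : ∀ p : Fin 3, ord (p, 0) < ord (p, 1) → f (p, 1) = cj := by
    intro p h
    have hpr : prior adj19 ord (p, 1) = {(p, 0)} := by rw [hp1 p, if_pos h]
    rcases hf (p, 1) with ⟨c, hc, hgt, hx⟩ | ⟨hno, _⟩
    · rw [hpr, Finset.filter_singleton] at hgt
      by_cases hfc : f (p, 0) = c
      · rw [hx, ← hfc, hf0 p]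
      · rw [if_neg hfc] at hgt; simp at hgt
    · exfalso
      apply hno
      refine ⟨cj, by simp [P19], ?_⟩
      rw [hpr, Finset.filter_singleton, if_pos (hf0 p)]
      simp
  refine ⟨?_, ?_, fun p => ⟨hA p, hB p⟩⟩
  all_goals
    have hscore : score f cj = 3 + (Finset.univ.filter fun p : Fin 3 => f (p, 1) = cj).card := by
      rw [score, Finset.card_filter, Finset.card_filter, Fintype.sum_prod_type]
      have : ∀ p : Fin 3, (∑ i : Fin 2, if f (p, i) = cj then 1 else 0) =
          1 + (if f (p, 1) = cj then 1 else 0) := by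
        intro p
        rw [Fin.sum_univ_two, if_pos (hf0 p)]
      simp only [this]
      rw [Finset.sum_add_distrib]
      simp
  · rw [hscore]; omega
  · exact hscore
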